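/- The implicit embedded method of IMEX-NPRK2[42]b is A-stable but not L-stable: with A = [[γ,0],[(−20+23√2)/42,γ]], γ = 1 − √2/2, and embedded weights b̂ = (1/15, 14/15), for every z ∈ ℂ with Re z ≤ 0 the matrix I − zA is invertible and the embedded stability function R̂(z) = 1 + z·b̂ᵀ(I − zA)⁻¹𝟙 satisfies |R̂(z)| ≤ 1; moreover b̂ᵀA⁻¹𝟙 ≠ 1, so R̂(z) does not tend to 0 as |z| → ∞. -/

import Mathlib

open Matrix

lemma inv_mulVec_form (γ a z : ℂ) (h : 1 - z*γ ≠ 0) :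
    ((1 - z • (!![γ,0;a,γ] : Matrix (Fin 2) (Fin 2) ℂ))⁻¹ *ᵥ 1)
      = ![1/(1-z*γ), (z*a + (1-z*γ))/(1-z*γ)^2] := by
  have hM : (1 - z • (!![γ,0;a,γ] : Matrix (Fin 2) (Fin 2) ℂ))
      = !![1-z*γ, 0; -(z*a), 1-z*γ] := by
    ext i j; fin_cases i <;> fin_cases j <;> simp [Matrix.one_apply]
  rw [hM]
  have hdet : (!![1-z*γ, 0; -(z*a), 1-z*γ] : Matrix (Fin 2) (Fin 2) ℂ).det = (1-z*γ)^2 := by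
    simp [Matrix.det_fin_two_of]; ring
  rw [Matrix.inv_def, hdet, Matrix.adjugate_fin_two]
  ext i
  fin_cases i <;>
    simp [Matrix.mulVec, dotProduct, Fin.sum_univ_two, Ring.inverse_eq_inv'] <;>
    field_simp <;> ring

set_option maxHeartbeats 1600000 in
lemma key_ineq (s : ℝ) (hs2 : s^2 = 2) (hsl : 1.414 ≤ s) (hsu : s ≤ 1.4149)
    (z : ℂ) (hx : z.re ≤ 0) :
    Complex.normSq ((1 - z*((1 - s/2 : ℝ):ℂ))^2 + z*(1 - z*((1 - s/2 : ℝ):ℂ))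
        + ((14/15*((-20 + 23*s)/42) : ℝ):ℂ)*z^2)
      ≤ Complex.normSq ((1 - z*((1 - s/2 : ℝ):ℂ))^2) := by
  set x := z.re
  set y := z.im
  simp only [Complex.normSq_apply, pow_two, Complex.add_re, Complex.add_im,
    Complex.sub_re, Complex.sub_im, Complex.mul_re, Complex.mul_im,
    Complex.one_re, Complex.one_im, Complex.ofReal_re, Complex.ofReal_im]
  nlinarith [mul_nonneg (neg_nonneg.2 hx) (add_nonneg (sq_nonneg x) (sq_nonneg y)),
    sq_nonneg (x^2 + y^2), sq_nonneg x, sq_nonneg y, neg_nonneg.2 hx,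
    mul_nonneg (sub_nonneg.2 hsu) (sq_nonneg x),
    mul_nonneg (sub_nonneg.2 hsl) (sq_nonneg y),
    mul_nonneg (sub_nonneg.2 hsu)
      (mul_nonneg (neg_nonneg.2 hx) (add_nonneg (sq_nonneg x) (sq_nonneg y))),
    mul_nonneg (sub_nonneg.2 hsu) (sq_nonneg (x^2 + y^2))]

lemma lower_bd (s b : ℝ) (hs2 : s^2 = 2) (hsl : 1.414 ≤ s) (hsu : s ≤ 1.4149)
    (hb : 100 ≤ b) :
    (1 + b*(1 - s/2))^2 ≤ 2 * ((1 + b*(1 - s/2))^2 - b*(1 + b*(1 - s/2))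
      + (14/15*((-20 + 23*s)/42))*b^2) := by
  nlinarith [mul_nonneg (sub_nonneg.2 hb) (by linarith : (0:ℝ) ≤ b), sq_nonneg b,
    mul_nonneg (sub_nonneg.2 hsl) (sq_nonneg b),
    mul_nonneg (sub_nonneg.2 hb) (sub_nonneg.2 hb)]

lemma neq_one (s : ℝ) (hs2 : s^2 = 2) (hsl : 1.414 ≤ s) :
    1/15 * ((1 - s/2)/(1 - s/2)^2)
      + 14/15 * ((-((-20 + 23*s)/42) + (1 - s/2))/(1 - s/2)^2) ≠ 1 := by
  have h2s : (2:ℝ) - s ≠ 0 := by nlinarith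
  intro h
  field_simp at h
  nlinarith [h, sq_nonneg s]

theorem stmt_15 :
    let g : ℝ := 1 - Real.sqrt 2 / 2
    let A : Matrix (Fin 2) (Fin 2) ℝ := !![g, 0; (-20 + 23*Real.sqrt 2)/42, g]
    let bhat : Fin 2 → ℝ := ![1/15, 14/15]
    let AC : Matrix (Fin 2) (Fin 2) ℂ := A.map Complex.ofReal
    let bC : Fin 2 → ℂ := fun i => (bhat i : ℂ)
    let Rhat : ℂ → ℂ := fun z => 1 + z * (bC ⬝ᵥ ((1 - z • AC)⁻¹ *ᵥ 1))
    (∀ z : ℂ, z.re ≤ 0 → IsUnit (1 - z • AC) ∧ ‖Rhat z‖ ≤ 1) ∧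
      bhat ⬝ᵥ (A⁻¹ *ᵥ 1) ≠ 1 ∧
      ¬ Filter.Tendsto Rhat (Filter.comap (fun w : ℂ => ‖w‖) Filter.atTop) (nhds 0) := by
  intro g A bhat AC bC Rhat
  set s : ℝ := Real.sqrt 2 with hs
  set aR : ℝ := (-20 + 23*s)/42 with haR
  have hs2 : s^2 = 2 := Real.sq_sqrt (by norm_num)
  have hs0 : 0 ≤ s := Real.sqrt_nonneg 2
  have hsl : 1.414 ≤ s := by nlinarith [sq_nonneg (s - 1.414)]
  have hsu : s ≤ 1.4149 := by nlinarith [sq_nonneg (s - 1.4149)]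
  have hg : g = 1 - s/2 := rfl
  have hgpos : 0 < g := by rw [hg]; nlinarith
  have hAC : AC = !![((g:ℝ):ℂ), 0; ((aR:ℝ):ℂ), ((g:ℝ):ℂ)] := by
    unfold AC A
    ext i j; fin_cases i <;> fin_cases j <;> simp [haR, hs]
  have hform : ∀ z : ℂ, 1 - z*(g:ℂ) ≠ 0 →
      Rhat z = ((1 - z*(g:ℂ))^2 + z*(1 - z*(g:ℂ)) + ((14/15*aR : ℝ):ℂ)*z^2)
        / (1 - z*(g:ℂ))^2 := by
    intro z hz
    show 1 + z * (bC ⬝ᵥ ((1 - z • AC)⁻¹ *ᵥ 1)) = _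
    rw [hAC, inv_mulVec_form _ _ _ hz]
    unfold bC bhat
    simp only [dotProduct, Fin.sum_univ_two, Matrix.cons_val_zero, Matrix.cons_val_one,
      Matrix.head_cons]
    push_cast
    field_simp
    ring
  have hd : ∀ z : ℂ, z.re ≤ 0 → 1 - z*(g:ℂ) ≠ 0 := by
    intro z hz h
    have h1 : (1 - z*(g:ℂ)).re = 1 - z.re * g := by
      simp [Complex.sub_re, Complex.mul_re]
    rw [h] at h1
    simp at h1
    nlinarith
  refine ⟨?_, ?_, ?_⟩
  · intro z hz
    have hz1 := hd z hz
    constructor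
    · rw [Matrix.isUnit_iff_isUnit_det]
      have hM : (1 - z • AC) = !![1-z*(g:ℂ), 0; -(z*(aR:ℂ)), 1-z*(g:ℂ)] := by
        rw [hAC]; ext i j; fin_cases i <;> fin_cases j <;> simp [Matrix.one_apply]
      rw [hM]
      have : (!![1-z*(g:ℂ), 0; -(z*(aR:ℂ)), 1-z*(g:ℂ)] :
          Matrix (Fin 2) (Fin 2) ℂ).det = (1-z*(g:ℂ))^2 := by
        simp [Matrix.det_fin_two_of]; ring
      rw [this]
      exact isUnit_iff_ne_zero.2 (pow_ne_zero 2 hz1)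
    · rw [hform z hz1, norm_div]
      have habsden : 0 < ‖(1 - z*(g:ℂ))^2‖ :=
        norm_pos_iff.2 (pow_ne_zero 2 hz1)
      rw [div_le_one habsden]
      rw [Complex.norm_def, Complex.norm_def]
      apply Real.sqrt_le_sqrt
      have := key_ineq s hs2 hsl hsu z hz
      rw [hg, haR]
      convert this using 3 <;> rw [hg, haR]
  · have hA : A = !![g, 0; aR, g] := rfl
    have hdetA : A.det = g^2 := by rw [hA]; simp [Matrix.det_fin_two_of]; ring
    have hAinv : A⁻¹ = (g^2)⁻¹ • !![g, 0; -aR, g] := by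
      rw [Matrix.inv_def, hdetA, hA, Matrix.adjugate_fin_two, Ring.inverse_eq_inv']
      congr 1; ext i j; fin_cases i <;> fin_cases j <;> simp
    rw [hAinv]
    have hval : bhat ⬝ᵥ (((g^2)⁻¹ • !![g, 0; -aR, g]) *ᵥ 1)
        = 1/15 * (g/g^2) + 14/15 * ((-aR + g)/g^2) := by
      unfold bhat
      simp [dotProduct, Matrix.mulVec, Fin.sum_univ_two]
      ring
    rw [hval, hg, haR]
    exact neq_one s hs2 hsl
  · intro hT
    have h2 := Metric.tendsto_nhds.mp hT (1/2) (by norm_num)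
    rw [Filter.eventually_comap] at h2
    obtain ⟨N, hN⟩ := Filter.eventually_atTop.mp h2
    set b : ℝ := max N 100 with hb
    have hb100 : (100:ℝ) ≤ b := le_max_right _ _
    have hbN : N ≤ b := le_max_left _ _
    have hb0 : (0:ℝ) ≤ b := by linarith
    have habs : ‖(-(b:ℂ))‖ = b := by
      rw [norm_neg, Complex.norm_of_nonneg hb0]
    have hlt := hN b hbN (-(b:ℂ)) habs
    rw [dist_zero_right] at hlt
    have hz1 : 1 - (-(b:ℂ))*(g:ℂ) ≠ 0 := by
      intro h
      have h1 : (1 - (-(b:ℂ))*(g:ℂ)).re = 1 + b * g := by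
        simp [Complex.sub_re, Complex.mul_re]
      rw [h] at h1
      simp at h1
      nlinarith
    have hRb := hform (-(b:ℂ)) hz1
    have hgc : ((g:ℝ):ℂ) = 1 - (s:ℂ)/2 := by rw [hg]; push_cast; ring
    have hac : ((14/15*aR : ℝ):ℂ) = 14/15*((-20+23*(s:ℂ))/42) := by
      rw [haR]; push_cast; ring
    have hnum : (1 - (-(b:ℂ))*(g:ℂ))^2 + (-(b:ℂ))*(1 - (-(b:ℂ))*(g:ℂ))
        + ((14/15*aR : ℝ):ℂ)*(-(b:ℂ))^2
        = (((1 + b*(1 - s/2))^2 - b*(1 + b*(1 - s/2))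
            + (14/15*((-20 + 23*s)/42))*b^2 : ℝ):ℂ) := by
      rw [hgc, hac]; push_cast; ring
    have hden : (1 - (-(b:ℂ))*(g:ℂ))^2 = (((1 + b*(1 - s/2))^2 : ℝ):ℂ) := by
      rw [hgc]; push_cast; ring
    rw [hRb, hnum, hden] at hlt
    set nR : ℝ := (1 + b*(1 - s/2))^2 - b*(1 + b*(1 - s/2))
      + (14/15*((-20 + 23*s)/42))*b^2 with hnR
    set dR : ℝ := (1 + b*(1 - s/2))^2 with hdR
    have hdRpos : 0 < dR := by
      rw [hdR]
      have h1 : 0 < 1 - s/2 := by nlinarith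
      positivity
    have h2n : dR ≤ 2 * nR := by
      rw [hnR, hdR]; exact lower_bd s b hs2 hsl hsu hb100
    have hnRpos : 0 < nR := by linarith
    clear hnR hdR
    clear_value nR dR
    have habs2 : ‖(((nR:ℝ):ℂ) / ((dR:ℝ):ℂ))‖ = nR / dR := by
      rw [norm_div, Complex.norm_real, Complex.norm_real, Real.norm_eq_abs, Real.norm_eq_abs,
        abs_of_pos hnRpos, abs_of_pos hdRpos]
    rw [habs2] at hlt
    have hhalf : (1:ℝ)/2 ≤ nR / dR := by
      rw [le_div_iff₀ hdRpos]; linarith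
    linarith
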